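/- The k-algebra homomorphism from the path algebra kΓ to the Leavitt path algebra L_k(Γ) sending every vertex and every arrow to itself is injective. -/

import Mathlib

/-! Preamble: digraphs, paths, and Leavitt path algebras over a commutative ring. -/

structure DGraph : Type 1 where
  V : Type
  E : Type
  s : E → V
  t : E → V

namespace DGraph

/-- Generators of the Leavitt path algebra: vertices, arrows, ghost (dual) arrows. -/
inductive Gen (Γ : DGraph) : Type
  | vert : Γ.V → Gen Γ
  | edge : Γ.E → Gen Γ
  | ghost : Γ.E → Gen Γ

variable (Γ : DGraph)

def IsSink (v : Γ.V) : Prop := ∀ e : Γ.E, Γ.s e ≠ v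

def RowFinite : Prop := ∀ v : Γ.V, {e : Γ.E | Γ.s e = v}.Finite

/-- `IsWalkFrom v l` : the list of arrows `l` forms a path starting at `v`. -/
def IsWalkFrom : Γ.V → List Γ.E → Prop
  | _, [] => True
  | v, e :: l => Γ.s e = v ∧ IsWalkFrom (Γ.t e) l

/-- Target of a walk. -/
def walkTrg : Γ.V → List Γ.E → Γ.V
  | v, [] => v
  | _, e :: l => walkTrg (Γ.t e) l

/-- A (finite) path in `Γ`: a source vertex together with a compatible list of arrows.
A path of length 0 is a single vertex. -/
structure Path (Γ : DGraph) : Type where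
  src : Γ.V
  edges : List Γ.E
  valid : Γ.IsWalkFrom src edges

variable {Γ}

def Path.trg (p : Path Γ) : Γ.V := Γ.walkTrg p.src p.edges

/-- `q` is an initial segment of `p`, i.e. `p = q r`. -/
def IsInitialSegment (q p : Path Γ) : Prop := p.src = q.src ∧ q.edges <+: p.edges

/-- A cycle: a path of positive length from a vertex back to itself with pairwise
distinct sources of its arrows. -/
def Path.IsCycle (p : Path Γ) : Prop :=
  p.edges ≠ [] ∧ p.trg = p.src ∧ (p.edges.map Γ.s).Nodup

/-- The vertex `v` is on the path `p`. -/
def Path.OnPath (p : Path Γ) (v : Γ.V) : Prop := p.src = v ∨ ∃ e ∈ p.edges, Γ.t e = v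

/-- The path `p` has no exit: every arrow whose source is on `p` is an arrow of `p`. -/
def NoExit (p : Path Γ) : Prop := ∀ f : Γ.E, p.OnPath (Γ.s f) → f ∈ p.edges

variable (Γ)

/-- There is a path from `u` to `v`. -/
def Reaches (u v : Γ.V) : Prop := ∃ p : Path Γ, p.src = u ∧ p.trg = v

/-- The cycles of `Γ` are pairwise disjoint: two cycles sharing a vertex coincide
(up to rotation, i.e. they have the same arrows). -/
def CyclesPairwiseDisjoint : Prop :=
  ∀ C D : Path Γ, C.IsCycle → D.IsCycle → (∃ v, C.OnPath v ∧ D.OnPath v) →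
    C.edges.Perm D.edges

def Hereditary (H : Set Γ.V) : Prop := ∀ u v : Γ.V, u ∈ H → Γ.Reaches u v → v ∈ H

def Saturated (H : Set Γ.V) : Prop :=
  ∀ v : Γ.V, ¬ Γ.IsSink v → {e : Γ.E | Γ.s e = v}.Finite →
    (∀ e : Γ.E, Γ.s e = v → Γ.t e ∈ H) → v ∈ H

/-- The full subgraph of `Γ` on a set `W` of vertices. -/
abbrev restrict (W : Set Γ.V) : DGraph where
  V := W
  E := {e : Γ.E // Γ.s e ∈ W ∧ Γ.t e ∈ W}
  s e := ⟨Γ.s e.1, e.2.1⟩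
  t e := ⟨Γ.t e.1, e.2.2⟩

/-- The defining relations of the Leavitt path algebra, as a relation on the free
algebra on the generators: (V), (E), (CK1) and (CK2) (the latter imposed at every
vertex which is not a sink and emits finitely many arrows). -/
inductive LRel (k : Type) [CommRing k] (Γ : DGraph) :
    FreeAlgebra k (Gen Γ) → FreeAlgebra k (Gen Γ) → Prop
  | vert_idem (v : Γ.V) :
      LRel k Γ (FreeAlgebra.ι k (Gen.vert v) * FreeAlgebra.ι k (Gen.vert v))
        (FreeAlgebra.ι k (Gen.vert v))
  | vert_orth (v w : Γ.V) : v ≠ w →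
      LRel k Γ (FreeAlgebra.ι k (Gen.vert v) * FreeAlgebra.ι k (Gen.vert w)) 0
  | edge_src (e : Γ.E) :
      LRel k Γ (FreeAlgebra.ι k (Gen.vert (Γ.s e)) * FreeAlgebra.ι k (Gen.edge e))
        (FreeAlgebra.ι k (Gen.edge e))
  | edge_trg (e : Γ.E) :
      LRel k Γ (FreeAlgebra.ι k (Gen.edge e) * FreeAlgebra.ι k (Gen.vert (Γ.t e)))
        (FreeAlgebra.ι k (Gen.edge e))
  | ghost_src (e : Γ.E) :
      LRel k Γ (FreeAlgebra.ι k (Gen.vert (Γ.t e)) * FreeAlgebra.ι k (Gen.ghost e))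
        (FreeAlgebra.ι k (Gen.ghost e))
  | ghost_trg (e : Γ.E) :
      LRel k Γ (FreeAlgebra.ι k (Gen.ghost e) * FreeAlgebra.ι k (Gen.vert (Γ.s e)))
        (FreeAlgebra.ι k (Gen.ghost e))
  | ck1_same (e : Γ.E) :
      LRel k Γ (FreeAlgebra.ι k (Gen.ghost e) * FreeAlgebra.ι k (Gen.edge e))
        (FreeAlgebra.ι k (Gen.vert (Γ.t e)))
  | ck1_diff (e f : Γ.E) : e ≠ f →
      LRel k Γ (FreeAlgebra.ι k (Gen.ghost e) * FreeAlgebra.ι k (Gen.edge f)) 0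
  | ck2 (v : Γ.V) (h : {e : Γ.E | Γ.s e = v}.Finite) (hns : ¬ Γ.IsSink v) :
      LRel k Γ (FreeAlgebra.ι k (Gen.vert v))
        (∑ e ∈ h.toFinset, FreeAlgebra.ι k (Gen.edge e) * FreeAlgebra.ι k (Gen.ghost e))

/-- The (unitized) Leavitt path algebra of `Γ` over `k`.  For a digraph with finitely
many vertices, see `LVF` below where additionally `1 = Σ v` is imposed; in general the
Leavitt path algebra proper is the (non-unital) subalgebra spanned by the nonempty
words in the generators, cf. `lpa`. -/
abbrev LV (k : Type) [CommRing k] (Γ : DGraph) : Type := RingQuot (LRel k Γ)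

/-- The image of a generator in the Leavitt path algebra. -/
def genL (k : Type) [CommRing k] (Γ : DGraph) (g : Gen Γ) : LV k Γ :=
  RingQuot.mkAlgHom k (LRel k Γ) (FreeAlgebra.ι k g)

/-- For `Γ` with finitely many vertices, the relations of the Leavitt path algebra
together with `1 = Σ_{v ∈ V} v`. -/
def LRelU (k : Type) [CommRing k] (Γ : DGraph) [Fintype Γ.V] :
    FreeAlgebra k (Gen Γ) → FreeAlgebra k (Gen Γ) → Prop :=
  fun a b => LRel k Γ a b ∨
    (a = 1 ∧ b = ∑ v : Γ.V, FreeAlgebra.ι k (Gen.vert v))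

/-- The Leavitt path algebra of a digraph with finitely many vertices (a unital
algebra, with `1 = Σ_{v ∈ V} v`). -/
abbrev LVF (k : Type) [CommRing k] (Γ : DGraph) [Fintype Γ.V] : Type :=
  RingQuot (LRelU k Γ)

def genF (k : Type) [CommRing k] (Γ : DGraph) [Fintype Γ.V] (g : Gen Γ) : LVF k Γ :=
  RingQuot.mkAlgHom k (LRelU k Γ) (FreeAlgebra.ι k g)

section Words

variable {k : Type} [CommRing k] {A : Type} [Ring A]

/-- The element `v e₁ ⋯ e_n` of an algebra `A`, given an interpretation `g` of the
generators. -/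
def wordElem (g : Gen Γ → A) (v : Γ.V) (l : List Γ.E) : A :=
  g (Gen.vert v) * (l.map fun e => g (Gen.edge e)).prod

/-- The element `e_n* ⋯ e₁* v`. -/
def wordStar (g : Gen Γ → A) (v : Γ.V) (l : List Γ.E) : A :=
  (l.reverse.map fun e => g (Gen.ghost e)).prod * g (Gen.vert v)

variable {Γ}

/-- The element of the algebra corresponding to a path `p`. -/
def pElem (g : Gen Γ → A) (p : Path Γ) : A := wordElem Γ g p.src p.edges

/-- The element of the algebra corresponding to the dual path `p*`. -/
def pStar (g : Gen Γ → A) (p : Path Γ) : A := wordStar Γ g p.src p.edges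

/-- `Cⁿ` for `n ∈ ℤ`, with `C⁰ := s(C)` and `C⁻ⁿ := (C*)ⁿ`. -/
def cycPow (g : Gen Γ → A) (C : Path Γ) (n : ℤ) : A :=
  if n = 0 then g (Gen.vert C.src)
  else if 0 < n then pElem g C ^ n.toNat
  else pStar g C ^ (-n).toNat

end Words

/-- The k-submodule of the unitized algebra `LV k Γ` spanned by the nonempty words
in the generators: this is the Leavitt path algebra proper (a two-sided ideal). -/
def lpa (k : Type) [CommRing k] (Γ : DGraph) : Submodule k (LV k Γ) :=
  Submodule.span k
    {x : LV k Γ | ∃ l : List (Gen Γ), l ≠ [] ∧ x = (l.map (genL k Γ)).prod}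

/-- The image of the path algebra `kΓ` in `LV k Γ`: the k-span of the paths. -/
def pathSpan (k : Type) [CommRing k] (Γ : DGraph) : Submodule k (LV k Γ) :=
  Submodule.span k (Set.range (pElem (genL k Γ)))

/-- The right ideal generated by an element `a` of a ring `A` (a submodule for the
right action of `A`, i.e. an `Aᵐᵒᵖ`-submodule). -/
def rIdeal (A : Type) [Ring A] (a : A) : Submodule Aᵐᵒᵖ A :=
  Submodule.span Aᵐᵒᵖ {a}

/-- A right `LV k Γ`-module (i.e. left `(LV k Γ)ᵐᵒᵖ`-module) is unital if
`M = M ⬝ L(Γ)`, equivalently every element is a finite sum of elements of `M·v·L`. -/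
def IsUnitalMod (k : Type) [CommRing k] (Γ : DGraph) (M : Type) [AddCommGroup M]
    [Module (LV k Γ)ᵐᵒᵖ M] : Prop :=
  ∀ m : M, m ∈ Submodule.span (LV k Γ)ᵐᵒᵖ
    {x : M | ∃ (v : Γ.V) (y : M), x = (MulOpposite.op (genL k Γ (Gen.vert v))) • y}

/-- One-step reduction of `Γ` at a loopless vertex `v`: paths of length two through
`v` become new arrows, and `v` together with all arrows touching it is deleted. -/
abbrev reduceAt (v : Γ.V) (hl : ∀ e : Γ.E, Γ.s e = v → Γ.t e ≠ v) : DGraph where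
  V := {u : Γ.V // u ≠ v}
  E := {e : Γ.E // Γ.s e ≠ v ∧ Γ.t e ≠ v} ⊕
       {fg : Γ.E × Γ.E // Γ.t fg.1 = v ∧ Γ.s fg.2 = v}
  s := fun x => match x with
    | Sum.inl e => ⟨Γ.s e.1, e.2.1⟩
    | Sum.inr fg => ⟨Γ.s fg.1.1, fun h => hl fg.1.1 h fg.2.1⟩
  t := fun x => match x with
    | Sum.inl e => ⟨Γ.t e.1, e.2.2⟩
    | Sum.inr fg => ⟨Γ.t fg.1.2, fun h => hl fg.1.2 fg.2.2 h⟩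

/-- The homogeneous component of degree `g` of `LV k Γ` with respect to a degree
assignment `d` on the generators, with values in a group `G`. -/
def gcomp (k : Type) [CommRing k] (Γ : DGraph) {G : Type} [Group G]
    (d : Gen Γ → G) (g : G) : Submodule k (LV k Γ) :=
  Submodule.span k
    {x : LV k Γ | ∃ l : List (Gen Γ), (l.map d).prod = g ∧ x = (l.map (genL k Γ)).prod}

/-- The universal degree assignment, with values in the free group on the arrows. -/
def dUniv (Γ : DGraph) : Gen Γ → FreeGroup Γ.E
  | Gen.vert _ => 1
  | Gen.edge e => FreeGroup.of e
  | Gen.ghost e => (FreeGroup.of e)⁻¹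

end DGraph

/-- Gelfand–Kirillov dimension of an `F`-algebra (value in `ℝ≥0∞`):
`limsup_n log dim(Wⁿ)/log n` for a finite-dimensional generating subspace `W`
containing `1` (the supremum is taken over all such `W`; for a finitely generated
algebra the value does not depend on the choice). -/
noncomputable def gkDim (F A : Type) [Field F] [Ring A] [Algebra F A] : ENNReal :=
  ⨆ W : {W : Submodule F A //
      FiniteDimensional F W ∧ (1 : A) ∈ W ∧ ∀ x : A, ∃ n : ℕ, x ∈ (W : Submodule F A) ^ n},
    Filter.limsup (fun n : ℕ =>
      ENNReal.ofReal
        (Real.log (Module.finrank F ↥((W : Submodule F A) ^ n)) / Real.log n))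
      Filter.atTop

/-- A module is indecomposable if it is nonzero and admits no nontrivial direct sum
decomposition. -/
def IsIndecomposableModule (R M : Type) [Ring R] [AddCommGroup M] [Module R M] : Prop :=
  Nontrivial M ∧ ∀ A B : Submodule R M, IsCompl A B → A = ⊥ ∨ B = ⊥

namespace LPAProof
open DGraph

variable {Γ : DGraph}

attribute [local instance] Classical.propDecidable

/-- A maximal path: either an infinite path or a finite path ending at a sink,
encoded by a source vertex and a function `ℕ → Option Γ.E`. -/
structure MaxPath (Γ : DGraph) : Type where
  src : Γ.V
  f : ℕ → Option Γ.E
  h0 : ∀ e, f 0 = some e → Γ.s e = src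
  hsink0 : f 0 = none → Γ.IsSink src
  hchain : ∀ n e, f n = some e →
    (∀ e', f (n+1) = some e' → Γ.s e' = Γ.t e) ∧ (f (n+1) = none → Γ.IsSink (Γ.t e))

theorem MaxPath.ext' {x y : MaxPath Γ} (h1 : x.src = y.src) (h2 : x.f = y.f) : x = y := by
  cases x; cases y; simp_all

/-- Prepend an arrow to a maximal path. -/
def MaxPath.cons (e : Γ.E) (x : MaxPath Γ) (h : Γ.t e = x.src) : MaxPath Γ where
  src := Γ.s e
  f n := match n with | 0 => some e | n+1 => x.f n
  h0 := by intro e' he'; cases he'; rfl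
  hsink0 := by intro h'; cases h'
  hchain := by
    intro n e' he'
    match n with
    | 0 =>
      cases he'
      exact ⟨fun e'' he'' => (x.h0 e'' he'').trans h.symm, fun hn => h ▸ x.hsink0 hn⟩
    | n+1 => exact x.hchain n e' he'

@[simp] lemma MaxPath.cons_src (e : Γ.E) (x : MaxPath Γ) (h : Γ.t e = x.src) :
    (x.cons e h).src = Γ.s e := rfl

@[simp] lemma MaxPath.cons_f_zero (e : Γ.E) (x : MaxPath Γ) (h : Γ.t e = x.src) :
    (x.cons e h).f 0 = some e := rfl

@[simp] lemma MaxPath.cons_f_succ (e : Γ.E) (x : MaxPath Γ) (h : Γ.t e = x.src) (n : ℕ) :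
    (x.cons e h).f (n+1) = x.f n := rfl

/-- Remove the first arrow of a maximal path. -/
def MaxPath.tail (x : MaxPath Γ) (e : Γ.E) (h : x.f 0 = some e) : MaxPath Γ where
  src := Γ.t e
  f n := x.f (n+1)
  h0 := fun e' he' => (x.hchain 0 e h).1 e' he'
  hsink0 := fun h' => (x.hchain 0 e h).2 h'
  hchain := fun n e' he' => x.hchain (n+1) e' he'

@[simp] lemma MaxPath.tail_src (x : MaxPath Γ) (e : Γ.E) (h : x.f 0 = some e) :
    (x.tail e h).src = Γ.t e := rfl

@[simp] lemma MaxPath.tail_f (x : MaxPath Γ) (e : Γ.E) (h : x.f 0 = some e) (n : ℕ) :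
    (x.tail e h).f n = x.f (n+1) := rfl

lemma MaxPath.tail_cons (e : Γ.E) (x : MaxPath Γ) (h : Γ.t e = x.src)
    (h' : (x.cons e h).f 0 = some e) : (x.cons e h).tail e h' = x := by
  apply MaxPath.ext'
  · simp [h]
  · funext n; rfl

lemma MaxPath.cons_tail (x : MaxPath Γ) (e : Γ.E) (h : x.f 0 = some e)
    (h' : Γ.t e = (x.tail e h).src) : (x.tail e h).cons e h' = x := by
  apply MaxPath.ext'
  · simp [x.h0 e h]
  · funext n; cases n with
    | zero => exact h.symm
    | succ n => rfl

open Classical in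
/-- Choose an arrow out of every non-sink. -/
noncomputable def pick (Γ : DGraph) (v : Γ.V) : Option Γ.E :=
  if h : Γ.IsSink v then none
  else some (Classical.choose (by
    simp only [DGraph.IsSink, not_forall, not_not] at h; exact h))

lemma pick_none {v : Γ.V} (h : pick Γ v = none) : Γ.IsSink v := by
  by_contra hs; rw [pick, dif_neg hs] at h; cases h

lemma pick_some {v : Γ.V} {e : Γ.E} (h : pick Γ v = some e) : Γ.s e = v := by
  by_cases hs : Γ.IsSink v
  · rw [pick, dif_pos hs] at h; cases h
  · rw [pick, dif_neg hs] at h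
    cases h
    exact Classical.choose_spec (by
      simp only [DGraph.IsSink, not_forall, not_not] at hs; exact hs)

noncomputable def vseq (v : Γ.V) : ℕ → Γ.V
  | 0 => v
  | n+1 => match pick Γ (vseq v n) with
    | some e => Γ.t e
    | none => vseq v n

/-- A maximal path starting from any given vertex. -/
noncomputable def maxPathFrom (v : Γ.V) : MaxPath Γ where
  src := v
  f n := pick Γ (vseq v n)
  h0 := fun e he => pick_some he
  hsink0 := fun h => pick_none h
  hchain := by
    intro n e he
    have he0 : pick Γ (vseq v n) = some e := he
    have hv : vseq v (n+1) = Γ.t e := by unfold vseq; rw [he0]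
    constructor
    · intro e' he'
      have he1 : pick Γ (vseq v (n+1)) = some e' := he'
      rw [hv] at he1; exact pick_some he1
    · intro hn
      have hn1 : pick Γ (vseq v (n+1)) = none := hn
      rw [hv] at hn1; exact pick_none hn1

@[simp] lemma maxPathFrom_src (v : Γ.V) : (maxPathFrom v).src = v := rfl

section Rep

variable (k : Type) [CommRing k]

/-- The module on which the Leavitt path algebra acts: free on maximal paths
together with an integer degree. -/
abbrev M (Γ : DGraph) : Type := (MaxPath Γ × ℤ) →₀ k

/-- The action of a generator on `M`. -/
noncomputable def genAct (g : Gen Γ) : Module.End k (M k Γ) :=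
  Finsupp.lift (M k Γ) k (MaxPath Γ × ℤ) fun b =>
    match g with
    | Gen.vert v => if b.1.src = v then Finsupp.single b 1 else 0
    | Gen.edge e => if h : Γ.t e = b.1.src then
        Finsupp.single (b.1.cons e h, b.2 + 1) 1 else 0
    | Gen.ghost e => if h : b.1.f 0 = some e then
        Finsupp.single (b.1.tail e h, b.2 - 1) 1 else 0

lemma genAct_single (g : Gen Γ) (b : MaxPath Γ × ℤ) (c : k) :
    genAct k g (Finsupp.single b c) = c •
      (match g with
      | Gen.vert v => if b.1.src = v then Finsupp.single b 1 else 0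
      | Gen.edge e => if h : Γ.t e = b.1.src then
          Finsupp.single (b.1.cons e h, b.2 + 1) 1 else 0
      | Gen.ghost e => if h : b.1.f 0 = some e then
          Finsupp.single (b.1.tail e h, b.2 - 1) 1 else 0) := by
  rw [genAct, Finsupp.lift_apply]
  exact Finsupp.sum_single_index (zero_smul k _)

lemma vert_single (v : Γ.V) (x : MaxPath Γ) (m : ℤ) (c : k) :
    genAct k (Gen.vert v) (Finsupp.single (x, m) c) =
      if x.src = v then Finsupp.single (x, m) c else 0 := by
  by_cases h : x.src = v
  · rw [genAct_single]; dsimp only; rw [if_pos h, if_pos h, Finsupp.smul_single, smul_eq_mul,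
      mul_one]
  · rw [genAct_single]; dsimp only; rw [if_neg h, if_neg h, smul_zero]

lemma edge_single (e : Γ.E) (x : MaxPath Γ) (m : ℤ) (c : k) :
    genAct k (Gen.edge e) (Finsupp.single (x, m) c) =
      if h : Γ.t e = x.src then Finsupp.single (x.cons e h, m + 1) c else 0 := by
  by_cases h : Γ.t e = x.src
  · rw [genAct_single]; dsimp only; rw [dif_pos h, dif_pos h, Finsupp.smul_single, smul_eq_mul,
      mul_one]
  · rw [genAct_single]; dsimp only; rw [dif_neg h, dif_neg h, smul_zero]

lemma ghost_single (e : Γ.E) (x : MaxPath Γ) (m : ℤ) (c : k) :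
    genAct k (Gen.ghost e) (Finsupp.single (x, m) c) =
      if h : x.f 0 = some e then Finsupp.single (x.tail e h, m - 1) c else 0 := by
  by_cases h : x.f 0 = some e
  · rw [genAct_single]; dsimp only; rw [dif_pos h, dif_pos h, Finsupp.smul_single, smul_eq_mul,
      mul_one]
  · rw [genAct_single]; dsimp only; rw [dif_neg h, dif_neg h, smul_zero]

/-- The interpretation of the free algebra. -/
noncomputable def actF : FreeAlgebra k (Gen Γ) →ₐ[k] Module.End k (M k Γ) :=
  FreeAlgebra.lift k (genAct k)

@[simp] lemma actF_ι (g : Gen Γ) : actF k (FreeAlgebra.ι k g) = genAct k g :=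
  FreeAlgebra.lift_ι_apply _ _

lemma end_ext {f g : Module.End k (M k Γ)}
    (h : ∀ b : MaxPath Γ × ℤ, ∀ c : k, f (Finsupp.single b c) = g (Finsupp.single b c)) :
    f = g := by
  apply Finsupp.lhom_ext
  intro a b; exact h a b

theorem rel_preserved ⦃a b : FreeAlgebra k (Gen Γ)⦄ (h : LRel k Γ a b) :
    actF k a = actF k b := by
  induction h with
  | vert_idem v =>
    simp only [map_mul, actF_ι]
    apply end_ext
    rintro ⟨x, m⟩ c
    rw [Module.End.mul_apply, vert_single]
    by_cases h1 : x.src = v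
    · rw [if_pos h1, vert_single, if_pos h1]
    · rw [if_neg h1, map_zero]
  | vert_orth v w hvw =>
    simp only [map_mul, actF_ι, map_zero]
    apply end_ext
    rintro ⟨x, m⟩ c
    rw [Module.End.mul_apply, vert_single]
    by_cases h1 : x.src = w
    · rw [if_pos h1, vert_single, if_neg (fun h => hvw (h.symm.trans h1))]
      rfl
    · rw [if_neg h1, map_zero]
      rfl
  | edge_src e =>
    simp only [map_mul, actF_ι]
    apply end_ext
    rintro ⟨x, m⟩ c
    rw [Module.End.mul_apply, edge_single]
    by_cases h1 : Γ.t e = x.src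
    · rw [dif_pos h1, vert_single,
        if_pos (show (MaxPath.cons e x h1).src = Γ.s e from rfl)]
    · rw [dif_neg h1, map_zero]
  | edge_trg e =>
    simp only [map_mul, actF_ι]
    apply end_ext
    rintro ⟨x, m⟩ c
    rw [Module.End.mul_apply, vert_single]
    by_cases h1 : x.src = Γ.t e
    · rw [if_pos h1]
    · rw [if_neg h1, map_zero, edge_single, dif_neg (fun h => h1 h.symm)]
  | ghost_src e =>
    simp only [map_mul, actF_ι]
    apply end_ext
    rintro ⟨x, m⟩ c
    rw [Module.End.mul_apply, ghost_single]
    by_cases h1 : x.f 0 = some e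
    · rw [dif_pos h1, vert_single,
        if_pos (show (MaxPath.tail x e h1).src = Γ.t e from rfl)]
    · rw [dif_neg h1, map_zero]
  | ghost_trg e =>
    simp only [map_mul, actF_ι]
    apply end_ext
    rintro ⟨x, m⟩ c
    rw [Module.End.mul_apply, vert_single]
    by_cases h1 : x.src = Γ.s e
    · rw [if_pos h1]
    · rw [if_neg h1, map_zero, ghost_single,
        dif_neg (fun h => h1 (x.h0 e h).symm)]
  | ck1_same e =>
    simp only [map_mul, actF_ι]
    apply end_ext
    rintro ⟨x, m⟩ c
    rw [Module.End.mul_apply, edge_single]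
    by_cases h1 : Γ.t e = x.src
    · rw [dif_pos h1, ghost_single,
        dif_pos (show (MaxPath.cons e x h1).f 0 = some e from rfl),
        vert_single, if_pos h1.symm]
      rw [MaxPath.tail_cons e x h1]
      congr 2
      ring
    · rw [dif_neg h1, map_zero, vert_single, if_neg (fun h => h1 h.symm)]
  | ck1_diff e f hef =>
    simp only [map_mul, actF_ι, map_zero]
    apply end_ext
    rintro ⟨x, m⟩ c
    rw [Module.End.mul_apply, edge_single]
    by_cases h1 : Γ.t f = x.src
    · rw [dif_pos h1, ghost_single, dif_neg (show ¬ (MaxPath.cons f x h1).f 0 = some e from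
        fun h => hef (Option.some.inj h).symm)]
      rfl
    · rw [dif_neg h1, map_zero]
      rfl
  | ck2 v hfin hns =>
    rw [map_sum]
    simp only [map_mul, actF_ι]
    apply end_ext
    rintro ⟨x, m⟩ c
    rw [LinearMap.sum_apply, vert_single]
    rcases hb : x.f 0 with _ | e0
    · have hsink := x.hsink0 hb
      rw [if_neg (fun h : x.src = v => hns (h ▸ hsink))]
      symm
      apply Finset.sum_eq_zero
      intro e he
      rw [Module.End.mul_apply, ghost_single, dif_neg (by rw [hb]; simp), map_zero]
    · have hsrc : Γ.s e0 = x.src := x.h0 e0 hb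
      by_cases hv : x.src = v
      · rw [if_pos hv]
        symm
        rw [Finset.sum_eq_single_of_mem e0
          (by simp only [Set.Finite.mem_toFinset, Set.mem_setOf_eq]; rw [hsrc, hv])]
        · rw [Module.End.mul_apply, ghost_single, dif_pos hb,
            edge_single, dif_pos (show Γ.t e0 = (MaxPath.tail x e0 hb).src from rfl)]
          rw [MaxPath.cons_tail x e0 hb]
          congr 2
          ring
        · intro e he hne
          rw [Module.End.mul_apply, ghost_single, dif_neg (by
            rw [hb]
            exact fun h => hne (Option.some.inj h).symm), map_zero]
      · rw [if_neg hv]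
        symm
        apply Finset.sum_eq_zero
        intro e he
        simp only [Set.Finite.mem_toFinset, Set.mem_setOf_eq] at he
        rw [Module.End.mul_apply, ghost_single, dif_neg (by
          rw [hb]
          intro h
          exact hv (by rw [← hsrc, Option.some.inj h]; exact he)), map_zero]

/-- The representation of the Leavitt path algebra on `M`. -/
noncomputable def rho : LV k Γ →ₐ[k] Module.End k (M k Γ) :=
  RingQuot.liftAlgHom k ⟨actF k, rel_preserved k⟩

@[simp] lemma rho_gen (g : Gen Γ) : rho k (genL k Γ g) = genAct k g := by
  rw [genL, rho]
  rw [RingQuot.liftAlgHom_mkAlgHom_apply]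
  exact actF_ι k g

end Rep

/-- Prepend a walk to a maximal path. -/
def consList : (l : List Γ.E) → (v : Γ.V) → (x : MaxPath Γ) →
    Γ.IsWalkFrom v l → Γ.walkTrg v l = x.src → {y : MaxPath Γ // y.src = v}
  | [], _, x, _, ht => ⟨x, ht.symm⟩
  | e :: l, v, x, hw, ht =>
    let y := consList l (Γ.t e) x hw.2 ht
    ⟨MaxPath.cons e y.1 y.2.symm, hw.1⟩

lemma consList_cons (e : Γ.E) (l : List Γ.E) (v : Γ.V) (x : MaxPath Γ)
    (hw : Γ.IsWalkFrom v (e :: l)) (ht : Γ.walkTrg v (e :: l) = x.src) :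
    (consList (e :: l) v x hw ht).1 =
      MaxPath.cons e (consList l (Γ.t e) x hw.2 ht).1
        (consList l (Γ.t e) x hw.2 ht).2.symm := rfl

lemma walkTrg_concat (l : List Γ.E) (e : Γ.E) : ∀ v, Γ.walkTrg v (l ++ [e]) = Γ.t e := by
  induction l with
  | nil => intro v; rfl
  | cons f l ih => intro v; exact ih (Γ.t f)

lemma consList_injective : ∀ (l l' : List Γ.E) (v v' : Γ.V) (x : MaxPath Γ)
    (hw : Γ.IsWalkFrom v l) (hw' : Γ.IsWalkFrom v' l')
    (ht : Γ.walkTrg v l = x.src) (ht' : Γ.walkTrg v' l' = x.src),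
    l.length = l'.length →
    (consList l v x hw ht).1 = (consList l' v' x hw' ht').1 → l = l'
  | [], [], _, _, _, _, _, _, _, _, _ => rfl
  | [], _ :: _, _, _, _, _, _, _, _, hlen, _ => by simp at hlen
  | _ :: _, [], _, _, _, _, _, _, _, hlen, _ => by simp at hlen
  | e :: l, e' :: l', v, v', x, hw, hw', ht, ht', hlen, heq => by
    rw [consList_cons, consList_cons] at heq
    have hf := congrArg MaxPath.f heq
    have h0 := congrFun hf 0
    simp only [MaxPath.cons_f_zero] at h0
    have hee : e = e' := Option.some.inj h0
    subst hee
    have htails : (consList l (Γ.t e) x hw.2 ht).1 = (consList l' (Γ.t e) x hw'.2 ht').1 := by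
      apply MaxPath.ext'
      · rw [(consList l (Γ.t e) x hw.2 ht).2, (consList l' (Γ.t e) x hw'.2 ht').2]
      · funext n
        exact congrFun hf (n+1)
    have := consList_injective l l' (Γ.t e) (Γ.t e) x hw.2 hw'.2 ht ht'
      (by simpa using hlen) htails
    rw [this]

lemma Path.ext' {p q : Path Γ} (h1 : p.src = q.src) (h2 : p.edges = q.edges) : p = q := by
  cases p; cases q; simp_all

section Comp

variable (k : Type) [CommRing k]

lemma prodAct (l : List Γ.E) (v : Γ.V) (x : MaxPath Γ)
    (hw : Γ.IsWalkFrom v l) (ht : Γ.walkTrg v l = x.src) (n : ℤ) (c : k) :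
    ((l.map fun e => genAct k (Gen.edge e)).prod) (Finsupp.single (x, n) c) =
      Finsupp.single ((consList l v x hw ht).1, n + l.length) c := by
  induction l generalizing v with
  | nil => simp [consList]
  | cons e l ih =>
    rw [List.map_cons, List.prod_cons, Module.End.mul_apply,
      ih (Γ.t e) hw.2 ht, edge_single,
      dif_pos (consList l (Γ.t e) x hw.2 ht).2.symm, consList_cons]
    congr 2
    simp only [List.length_cons]
    push_cast
    ring

lemma rho_word_eq (p : Path Γ) :
    rho k (pElem (genL k Γ) p) =
      genAct k (Gen.vert p.src) * (p.edges.map fun e => genAct k (Gen.edge e)).prod := by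
  rw [pElem, wordElem, map_mul, map_list_prod, List.map_map]
  congr 1
  · exact rho_gen k _
  · congr 1
    apply List.map_congr_left
    intro e _
    exact rho_gen k _

lemma rho_pElem (p : Path Γ) (x : MaxPath Γ) (ht : p.trg = x.src) (n : ℤ) (c : k) :
    rho k (pElem (genL k Γ) p) (Finsupp.single (x, n) c) =
      Finsupp.single ((consList p.edges p.src x p.valid ht).1, n + p.edges.length) c := by
  rw [rho_word_eq, Module.End.mul_apply, prodAct k p.edges p.src x p.valid ht, vert_single,
    if_pos (consList p.edges p.src x p.valid ht).2]

lemma rho_pElem_zero (p : Path Γ) (x : MaxPath Γ) (ht : p.trg ≠ x.src) (n : ℤ) (c : k) :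
    rho k (pElem (genL k Γ) p) (Finsupp.single (x, n) c) = 0 := by
  rcases List.eq_nil_or_concat p.edges with hnil | ⟨l, e, hconcat⟩
  · have hsrc : p.trg = p.src := by rw [Path.trg, hnil]; rfl
    rw [rho_word_eq, hnil]
    simp only [List.map_nil, List.prod_nil, Module.End.mul_apply, Module.End.one_apply]
    rw [vert_single, if_neg (fun h => ht (hsrc.trans h.symm))]
  · rw [List.concat_eq_append] at hconcat
    have hte : p.trg = Γ.t e := by rw [Path.trg, hconcat, walkTrg_concat]
    rw [rho_word_eq, hconcat, List.map_append, List.prod_append]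
    simp only [List.map_cons, List.map_nil, List.prod_cons, List.prod_nil, mul_one,
      Module.End.mul_apply]
    rw [edge_single, dif_neg (fun h => ht (hte ▸ h))]
    simp

end Comp

end LPAProof
open DGraph in
/-- the canonical homomorphism from the path algebra `kΓ` to `L_k(Γ)`
sending every vertex and arrow to itself is injective; since the paths form a
`k`-basis of `kΓ`, this says exactly that the images of the (distinct) paths are
`k`-linearly independent in `L_k(Γ)`. -/
theorem path_algebra_embeds (k : Type) [CommRing k] (Γ : DGraph)
    (hrf : Γ.RowFinite) :
    LinearIndependent k (fun p : Path Γ => pElem (genL k Γ) p) := by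
  classical
  rw [linearIndependent_iff']
  intro s g hsum p₀ hp₀
  set x : LPAProof.MaxPath Γ := LPAProof.maxPathFrom p₀.trg with hx
  have hxsrc : p₀.trg = x.src := rfl
  set b₀ : LPAProof.MaxPath Γ × ℤ :=
    ((LPAProof.consList p₀.edges p₀.src x p₀.valid hxsrc).1, (p₀.edges.length : ℤ)) with hb₀
  have happ := congrArg (LPAProof.rho k) hsum
  rw [map_sum, map_zero] at happ
  have happ2 := congrArg (fun F : Module.End k (LPAProof.M k Γ) =>
    (F (Finsupp.single (x, (0 : ℤ)) 1)) b₀) happ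
  simp only [LinearMap.sum_apply, map_smul, LinearMap.smul_apply, LinearMap.zero_apply, Finsupp.coe_zero,
    Pi.zero_apply, Finsupp.finset_sum_apply, Finsupp.smul_apply] at happ2
  rw [Finset.sum_eq_single_of_mem p₀ hp₀] at happ2
  · rw [LPAProof.rho_pElem k p₀ x hxsrc 0 1] at happ2
    simp only [zero_add] at happ2
    rw [show ((LPAProof.consList p₀.edges p₀.src x p₀.valid hxsrc).1,
        (p₀.edges.length : ℤ)) = b₀ from rfl] at happ2
    rw [Finsupp.single_eq_same] at happ2
    simpa using happ2
  · intro p hp hne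
    by_cases hpt : p.trg = x.src
    · rw [LPAProof.rho_pElem k p x hpt 0 1]
      simp only [zero_add]
      rw [Finsupp.single_apply, if_neg, smul_zero]
      intro heq
      apply hne
      have hlen : p.edges.length = p₀.edges.length := by
        have := congrArg Prod.snd heq
        simpa [hb₀] using this
      have h1 := congrArg Prod.fst heq
      have hedges := LPAProof.consList_injective p.edges p₀.edges p.src p₀.src x
        p.valid p₀.valid hpt hxsrc hlen h1
      have hsrc : p.src = p₀.src := by
        rw [← (LPAProof.consList p.edges p.src x p.valid hpt).2,
          ← (LPAProof.consList p₀.edges p₀.src x p₀.valid hxsrc).2]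
        exact congrArg LPAProof.MaxPath.src h1
      exact LPAProof.Path.ext' hsrc hedges
    · rw [LPAProof.rho_pElem_zero k p x hpt 0 1]
      simp
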